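/- Let f₁, f₂ : E → ℝ ∪ {+∞} be proper convex lsc functions on a reflexive Banach space E, and define the proximal average h(X) = inf{ ½f₁(X₁) + ½f₂(X₂) + (1/8)‖X₁ − X₂‖² : X = ½(X₁ + X₂) }. Then the Legendre dual of h is h*(P) = inf{ ½f₁*(P₁) + ½f₂*(P₂) + (1/8)‖P₁ − P₂‖² : P = ½(P₁ + P₂), P₁,P₂ ∈ E* }. -/

import Mathlib

open NormedSpace

/-- Fenchel–Legendre conjugate of an extended-real-valued function. -/
noncomputable def FnConjE {E : Type*} [NormedAddCommGroup E] [NormedSpace ℝ E]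
    (f : E → EReal) (P : StrongDual ℝ E) : EReal :=
  ⨆ x : E, ((P x : ℝ) : EReal) - f x

/-- The proximal average of two functions. -/
noncomputable def ProxAvg {E : Type*} [NormedAddCommGroup E] [NormedSpace ℝ E]
    (f₁ f₂ : E → EReal) (x : E) : EReal :=
  ⨅ pr : {pr : E × E // x = (2⁻¹ : ℝ) • (pr.1 + pr.2)},
    ((2⁻¹ : ℝ) : EReal) * f₁ pr.1.1 + ((2⁻¹ : ℝ) : EReal) * f₂ pr.1.2 +
      (((8⁻¹ : ℝ) * ‖pr.1.1 - pr.1.2‖ ^ 2 : ℝ) : EReal)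


lemma ereal_real_sub_eq_bot_iff (a : ℝ) (c : EReal) : (a:EReal) - c = ⊥ ↔ c = ⊤ := by
  rw [sub_eq_add_neg, EReal.add_eq_bot_iff, EReal.neg_eq_bot_iff]
  simp

lemma ereal_not_top_le_coe (c : ℝ) : ¬ ((⊤:EReal) ≤ (c:EReal)) :=
  fun h => EReal.coe_ne_top c (top_le_iff.mp h)

lemma ereal_sub_le_comm (a : ℝ) (b c : EReal) : (a:EReal) - b ≤ c ↔ (a:EReal) - c ≤ b := by
  induction b using EReal.rec with
  | bot => simp [le_bot_iff, ereal_real_sub_eq_bot_iff]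
  | top => simp
  | coe b =>
    induction c using EReal.rec with
    | bot =>
      have h1 : (a:EReal) - (b:EReal) ≠ ⊥ := by rw [← EReal.coe_sub]; exact EReal.coe_ne_bot _
      have h2 : (a:EReal) - (⊥:EReal) = ⊤ := by
        rw [sub_eq_add_neg]; simp
      rw [h2]
      simp [le_bot_iff, h1, top_le_iff, EReal.coe_ne_top]
    | top => simp
    | coe c =>
      rw [← EReal.coe_sub, ← EReal.coe_sub, EReal.coe_le_coe_iff, EReal.coe_le_coe_iff]
      constructor <;> intro h <;> linarith

lemma ereal_coe_sub_iInf_le {ι : Sort*} (a : ℝ) (s : ι → EReal) (c : EReal)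
    (h : ∀ i, (a:EReal) - s i ≤ c) : (a:EReal) - ⨅ i, s i ≤ c := by
  rw [ereal_sub_le_comm]
  exact le_iInf fun i => (ereal_sub_le_comm a (s i) c).1 (h i)

lemma ereal_pointwise (A B : EReal) (hA : A ≠ ⊥) (hB : B ≠ ⊥)
    (p q₁ q₂ c c' : ℝ) (hle : p ≤ 2⁻¹*q₁ + 2⁻¹*q₂ + c + c') :
    (p:EReal) - (((2⁻¹:ℝ):EReal) * A + ((2⁻¹:ℝ):EReal) * B + (c:EReal)) ≤
      ((2⁻¹:ℝ):EReal) * ((q₁:EReal) - A) + ((2⁻¹:ℝ):EReal) * ((q₂:EReal) - B) + (c':EReal) := by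
  have hhalf : ((2⁻¹:ℝ):EReal) * (⊤:EReal) = ⊤ := EReal.coe_mul_top_of_pos (by norm_num)
  induction A using EReal.rec with
  | bot => exact absurd rfl hA
  | top =>
    induction B using EReal.rec with
    | bot => exact absurd rfl hB
    | top =>
      rw [hhalf]
      have : (⊤:EReal) + ⊤ + (c:EReal) = ⊤ := by
        rw [EReal.top_add_of_ne_bot (by simp), EReal.top_add_of_ne_bot (EReal.coe_ne_bot c)]
      rw [this]
      simp [ereal_real_sub_eq_bot_iff]
    | coe b =>
      rw [hhalf, ← EReal.coe_mul]
      have : (⊤:EReal) + ((2⁻¹*b:ℝ):EReal) + (c:EReal) = ⊤ := by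
        rw [EReal.top_add_of_ne_bot (EReal.coe_ne_bot _), EReal.top_add_of_ne_bot (EReal.coe_ne_bot c)]
      rw [this]
      simp [ereal_real_sub_eq_bot_iff]
  | coe a =>
    induction B using EReal.rec with
    | bot => exact absurd rfl hB
    | top =>
      rw [hhalf, ← EReal.coe_mul]
      have : ((2⁻¹*a:ℝ):EReal) + ⊤ + (c:EReal) = ⊤ := by
        rw [EReal.add_top_of_ne_bot (EReal.coe_ne_bot _), EReal.top_add_of_ne_bot (EReal.coe_ne_bot c)]
      rw [this]
      simp [ereal_real_sub_eq_bot_iff]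
    | coe b =>
      rw [← EReal.coe_mul, ← EReal.coe_sub, ← EReal.coe_sub, ← EReal.coe_mul, ← EReal.coe_mul,
        ← EReal.coe_mul, ← EReal.coe_add, ← EReal.coe_add, ← EReal.coe_add, ← EReal.coe_add,
        ← EReal.coe_sub, EReal.coe_le_coe_iff]
      linarith

lemma core_ineq {E : Type*} [NormedAddCommGroup E] [NormedSpace ℝ E]
    (P₁ P₂ : StrongDual ℝ E) (x₁ x₂ : E) :
    ((2⁻¹:ℝ) • (P₁ + P₂) : StrongDual ℝ E) ((2⁻¹:ℝ) • (x₁ + x₂)) ≤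
      2⁻¹ * P₁ x₁ + 2⁻¹ * P₂ x₂ + 8⁻¹*‖x₁-x₂‖^2 + 8⁻¹*‖P₁-P₂‖^2 := by
  have h1 : |((P₁ - P₂) (x₁ - x₂))| ≤ ‖P₁-P₂‖ * ‖x₁-x₂‖ := by
    simpa [Real.norm_eq_abs] using (P₁-P₂).le_opNorm (x₁-x₂)
  have h1a := abs_le.mp h1
  simp only [ContinuousLinearMap.smul_apply, ContinuousLinearMap.add_apply, map_smul, map_add,
    map_sub, ContinuousLinearMap.sub_apply, smul_eq_mul] at h1a ⊢
  nlinarith [h1a.1, h1a.2, sq_nonneg (‖P₁-P₂‖ - ‖x₁-x₂‖), norm_nonneg (P₁-P₂), norm_nonneg (x₁-x₂)]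

lemma exists_norming {E : Type*} [NormedAddCommGroup E] [NormedSpace ℝ E]
    (Q : StrongDual ℝ E) {ε : ℝ} (hε : 0 < ε) :
    ∃ z : E, 8⁻¹*‖z‖^2 - Q z ≤ -(2*‖Q‖^2) + ε := by
  rcases eq_or_ne Q 0 with h|h
  · exact ⟨0, by simp [h]; positivity⟩
  · have hQ : 0 < ‖Q‖ := norm_pos_iff.mpr h
    set δ := min (ε / (4*‖Q‖)) (‖Q‖/2) with hδdef
    have hδ : 0 < δ := lt_min (by positivity) (by positivity)
    have hM0 : 0 ≤ ‖Q‖ - δ := by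
      have : δ ≤ ‖Q‖/2 := min_le_right _ _
      linarith
    have hnle : ¬ ‖Q‖ ≤ ‖Q‖ - δ := by linarith
    rw [ContinuousLinearMap.opNorm_le_iff hM0] at hnle
    push_neg at hnle
    obtain ⟨x, hx⟩ := hnle
    have hxne : x ≠ 0 := by
      intro hx0; rw [hx0] at hx; simp at hx
    have hxn : 0 < ‖x‖ := norm_pos_iff.mpr hxne
    set u : E := (if 0 ≤ Q x then ‖x‖⁻¹ • x else -(‖x‖⁻¹ • x)) with hu
    have hun : ‖u‖ = 1 := by
      rcases le_or_gt 0 (Q x) with hc|hc <;>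
        simp [hu, hc, not_le.mpr, norm_smul, abs_of_nonneg (le_of_lt (inv_pos.mpr hxn)),
          inv_mul_cancel₀ (ne_of_gt hxn)]
    have hQu : ‖Q‖ - δ < Q u := by
      have : (‖Q‖ - δ) * ‖x‖ < |Q x| := by simpa [Real.norm_eq_abs] using hx
      rcases le_or_gt 0 (Q x) with hc|hc
      · have : Q u = ‖x‖⁻¹ * Q x := by simp [hu, hc]
        rw [this]
        rw [abs_of_nonneg hc] at ‹(‖Q‖ - δ) * ‖x‖ < |Q x|›
        calc ‖Q‖ - δ = (‖Q‖ - δ) * ‖x‖ * ‖x‖⁻¹ := by field_simp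
        _ < |Q x| * ‖x‖⁻¹ := by
            apply mul_lt_mul_of_pos_right _ (inv_pos.mpr hxn)
            rwa [abs_of_nonneg hc]
        _ = ‖x‖⁻¹ * Q x := by rw [abs_of_nonneg hc]; ring
      · have : Q u = ‖x‖⁻¹ * (-(Q x)) := by simp [hu, not_le.mpr hc]
        rw [this]
        rw [abs_of_neg hc] at ‹(‖Q‖ - δ) * ‖x‖ < |Q x|›
        calc ‖Q‖ - δ = (‖Q‖ - δ) * ‖x‖ * ‖x‖⁻¹ := by field_simp
        _ < -(Q x) * ‖x‖⁻¹ := mul_lt_mul_of_pos_right ‹_› (inv_pos.mpr hxn)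
        _ = ‖x‖⁻¹ * (-(Q x)) := by ring
    refine ⟨(4*‖Q‖) • u, ?_⟩
    have hz1 : ‖(4*‖Q‖) • u‖^2 = 16*‖Q‖^2 := by
      rw [norm_smul, hun, Real.norm_eq_abs, abs_of_nonneg (by positivity)]
      ring
    have hz2 : Q ((4*‖Q‖) • u) = (4*‖Q‖) * Q u := by simp
    rw [hz1, hz2]
    have hδε : δ ≤ ε / (4*‖Q‖) := min_le_left _ _
    have h4 : 4*‖Q‖*δ ≤ ε := by
      rw [le_div_iff₀ (by positivity)] at hδε
      linarith [hδε]
    nlinarith [hQu, hQ]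

set_option maxHeartbeats 2000000 in
theorem stmt11 {E : Type*} [NormedAddCommGroup E] [NormedSpace ℝ E] [CompleteSpace E]
    (hrefl : Function.Surjective (NormedSpace.inclusionInDoubleDual ℝ E))
    (f₁ f₂ : E → EReal)
    (hproper₁ : (∃ z, f₁ z ≠ ⊤) ∧ ∀ z, f₁ z ≠ ⊥)
    (hproper₂ : (∃ z, f₂ z ≠ ⊤) ∧ ∀ z, f₂ z ≠ ⊥)
    (hconv₁ : ∀ a b : E, ∀ t : ℝ, 0 ≤ t → t ≤ 1 →
      f₁ (t • a + (1 - t) • b) ≤ (t : EReal) * f₁ a + ((1 - t : ℝ) : EReal) * f₁ b)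
    (hconv₂ : ∀ a b : E, ∀ t : ℝ, 0 ≤ t → t ≤ 1 →
      f₂ (t • a + (1 - t) • b) ≤ (t : EReal) * f₂ a + ((1 - t : ℝ) : EReal) * f₂ b)
    (hlsc₁ : LowerSemicontinuous f₁) (hlsc₂ : LowerSemicontinuous f₂) :
    ∀ P : StrongDual ℝ E, FnConjE (ProxAvg f₁ f₂) P = ProxAvg (FnConjE f₁) (FnConjE f₂) P := by
  intro P
  refine le_antisymm ?_ ?_
  · rw [FnConjE]
    refine iSup_le fun x => ?_
    rw [ProxAvg]
    refine le_iInf fun pr => ?_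
    obtain ⟨⟨P₁, P₂⟩, hP⟩ := pr
    dsimp only at hP ⊢
    refine ereal_coe_sub_iInf_le _ _ _ ?_
    rintro ⟨⟨x₁, x₂⟩, hx⟩
    dsimp only at hx ⊢
    have key : (P x : ℝ) ≤ 2⁻¹ * P₁ x₁ + 2⁻¹ * P₂ x₂ + 8⁻¹*‖x₁-x₂‖^2 + 8⁻¹*‖P₁-P₂‖^2 := by
      rw [hP, hx]
      exact core_ineq P₁ P₂ x₁ x₂
    have h2 := ereal_pointwise (f₁ x₁) (f₂ x₂) (hproper₁.2 x₁) (hproper₂.2 x₂)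
      (P x) (P₁ x₁) (P₂ x₂) (8⁻¹*‖x₁-x₂‖^2) (8⁻¹*‖P₁-P₂‖^2) key
    refine h2.trans ?_
    have h0 : (0:EReal) ≤ ((2⁻¹:ℝ):EReal) := by
      rw [show ((0:EReal)) = ((0:ℝ):EReal) by simp]
      exact EReal.coe_le_coe_iff.mpr (by norm_num)
    have hs1 : ((P₁ x₁ : ℝ):EReal) - f₁ x₁ ≤ FnConjE f₁ P₁ :=
      le_iSup (fun y => ((P₁ y : ℝ):EReal) - f₁ y) x₁
    have hs2 : ((P₂ x₂ : ℝ):EReal) - f₂ x₂ ≤ FnConjE f₂ P₂ :=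
      le_iSup (fun y => ((P₂ y : ℝ):EReal) - f₂ y) x₂
    exact add_le_add (add_le_add
      (mul_le_mul_of_nonneg_left hs1 h0)
      (mul_le_mul_of_nonneg_left hs2 h0)) le_rfl

  · -- hard direction: ProxAvg (FnConjE f₁) (FnConjE f₂) P ≤ FnConjE (ProxAvg f₁ f₂) P
    rcases eq_or_ne (FnConjE (ProxAvg f₁ f₂) P) ⊤ with htop | hne
    · rw [htop]; exact le_top
    obtain ⟨xb₁, hxb₁⟩ := hproper₁.1
    obtain ⟨xb₂, hxb₂⟩ := hproper₂.1
    obtain ⟨a₀, ha₀⟩ : ∃ r : ℝ, f₁ xb₁ = (r : EReal) :=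
      ⟨(f₁ xb₁).toReal, (EReal.coe_toReal hxb₁ (hproper₁.2 _)).symm⟩
    obtain ⟨b₀, hb₀⟩ : ∃ r : ℝ, f₂ xb₂ = (r : EReal) :=
      ⟨(f₂ xb₂).toReal, (EReal.coe_toReal hxb₂ (hproper₂.2 _)).symm⟩
    have hVbar : ∀ x₁ x₂ (r₁ r₂ : ℝ), f₁ x₁ = (r₁:EReal) → f₂ x₂ = (r₂:EReal) →
        ProxAvg f₁ f₂ ((2⁻¹:ℝ) • (x₁ + x₂)) ≤
          ((2⁻¹*r₁ + 2⁻¹*r₂ + 8⁻¹*‖x₁-x₂‖^2 : ℝ) : EReal) := by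
      intro x₁ x₂ r₁ r₂ h1 h2
      refine (iInf_le _ ⟨(x₁, x₂), rfl⟩).trans ?_
      rw [h1, h2, ← EReal.coe_mul, ← EReal.coe_mul, ← EReal.coe_add, ← EReal.coe_add]
    have hbot : FnConjE (ProxAvg f₁ f₂) P ≠ ⊥ := by
      have h1 : ((P ((2⁻¹:ℝ) • (xb₁ + xb₂)) - (2⁻¹*a₀ + 2⁻¹*b₀ + 8⁻¹*‖xb₁-xb₂‖^2) : ℝ) : EReal)
          ≤ FnConjE (ProxAvg f₁ f₂) P := by
        rw [EReal.coe_sub]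
        refine le_trans (EReal.sub_le_sub le_rfl (hVbar xb₁ xb₂ a₀ b₀ ha₀ hb₀)) ?_
        exact le_iSup (fun x => ((P x : ℝ):EReal) - ProxAvg f₁ f₂ x) ((2⁻¹:ℝ) • (xb₁ + xb₂))
      exact fun hb => by rw [hb, le_bot_iff] at h1; exact EReal.coe_ne_bot _ h1
    set α := FnConjE (ProxAvg f₁ f₂) P with hα
    set a : ℝ := α.toReal with ha
    have hacoe : (a : EReal) = α := EReal.coe_toReal hne hbot
    -- the open convex set
    set C : Set (E × ℝ) := {p | ∃ (x₁ x₂ : E) (r₁ r₂ : ℝ), f₁ x₁ = (r₁:EReal) ∧ f₂ x₂ = (r₂:EReal) ∧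
      2⁻¹*r₁ + 2⁻¹*r₂ + 8⁻¹*‖x₁ - x₂ + p.1‖^2 - P ((2⁻¹:ℝ) • (x₁+x₂)) < p.2} with hCdef
    have hCopen : IsOpen C := by
      have hrep : C = ⋃ (x₁ : E), ⋃ (x₂ : E), ⋃ (r₁ : ℝ), ⋃ (r₂ : ℝ),
          ⋃ (_ : f₁ x₁ = (r₁:EReal)), ⋃ (_ : f₂ x₂ = (r₂:EReal)),
          {p : E × ℝ | 2⁻¹*r₁ + 2⁻¹*r₂ + 8⁻¹*‖x₁ - x₂ + p.1‖^2 - P ((2⁻¹:ℝ) • (x₁+x₂)) < p.2} := by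
        ext p
        simp only [hCdef, Set.mem_setOf_eq, Set.mem_iUnion]
        tauto
      rw [hrep]
      refine isOpen_iUnion fun x₁ => isOpen_iUnion fun x₂ => isOpen_iUnion fun r₁ =>
        isOpen_iUnion fun r₂ => isOpen_iUnion fun _ => isOpen_iUnion fun _ => ?_
      have hcont : Continuous fun p : E × ℝ =>
          2⁻¹*r₁ + 2⁻¹*r₂ + 8⁻¹*‖x₁ - x₂ + p.1‖^2 - P ((2⁻¹:ℝ) • (x₁+x₂)) := by fun_prop
      exact isOpen_lt hcont continuous_snd
    have hCconv : Convex ℝ C := by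
      rintro ⟨y, t⟩ ⟨x₁, x₂, r₁, r₂, h1, h2, hlt⟩ ⟨y', t'⟩ ⟨x₁', x₂', r₁', r₂', h1', h2', hlt'⟩
        lam mu hlam hmu hsum
      obtain rfl : mu = 1 - lam := by linarith
      dsimp only at hlt hlt'
      have hlam1 : lam ≤ 1 := by linarith
      have hc₁ := hconv₁ x₁ x₁' lam hlam hlam1
      have hc₂ := hconv₂ x₂ x₂' lam hlam hlam1
      rw [h1, h1'] at hc₁
      rw [h2, h2'] at hc₂
      rw [← EReal.coe_mul, ← EReal.coe_mul, ← EReal.coe_add] at hc₁ hc₂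
      have hne₁ : f₁ (lam • x₁ + (1 - lam) • x₁') ≠ ⊤ :=
        fun h => by rw [h] at hc₁; exact ereal_not_top_le_coe _ hc₁
      have hne₂ : f₂ (lam • x₂ + (1 - lam) • x₂') ≠ ⊤ :=
        fun h => by rw [h] at hc₂; exact ereal_not_top_le_coe _ hc₂
      obtain ⟨s₁, hs₁⟩ : ∃ r : ℝ, f₁ (lam • x₁ + (1 - lam) • x₁') = (r:EReal) :=
        ⟨_, (EReal.coe_toReal hne₁ (hproper₁.2 _)).symm⟩
      obtain ⟨s₂, hs₂⟩ : ∃ r : ℝ, f₂ (lam • x₂ + (1 - lam) • x₂') = (r:EReal) :=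
        ⟨_, (EReal.coe_toReal hne₂ (hproper₂.2 _)).symm⟩
      rw [hs₁] at hc₁
      rw [hs₂] at hc₂
      rw [EReal.coe_le_coe_iff] at hc₁ hc₂
      refine ⟨lam • x₁ + (1 - lam) • x₁', lam • x₂ + (1 - lam) • x₂', s₁, s₂, hs₁, hs₂, ?_⟩
      have hfst : (lam • (⟨y, t⟩ : E × ℝ) + (1 - lam) • (⟨y', t'⟩ : E × ℝ)).1
          = lam • y + (1 - lam) • y' := rfl
      have hsnd : (lam • (⟨y, t⟩ : E × ℝ) + (1 - lam) • (⟨y', t'⟩ : E × ℝ)).2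
          = lam * t + (1 - lam) * t' := rfl
      rw [hfst, hsnd]
      have hw : lam • x₁ + (1 - lam) • x₁' - (lam • x₂ + (1 - lam) • x₂') + (lam • y + (1 - lam) • y')
          = lam • (x₁ - x₂ + y) + (1 - lam) • (x₁' - x₂' + y') := by module
      rw [hw]
      have hn : ‖lam • (x₁ - x₂ + y) + (1 - lam) • (x₁' - x₂' + y')‖
          ≤ lam * ‖x₁ - x₂ + y‖ + (1 - lam) * ‖x₁' - x₂' + y'‖ := by
        refine (norm_add_le _ _).trans ?_
        rw [norm_smul, norm_smul, Real.norm_eq_abs, Real.norm_eq_abs,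
          abs_of_nonneg hlam, abs_of_nonneg hmu]
      have hq : 8⁻¹ * ‖lam • (x₁ - x₂ + y) + (1 - lam) • (x₁' - x₂' + y')‖^2
          ≤ lam * (8⁻¹ * ‖x₁ - x₂ + y‖^2) + (1 - lam) * (8⁻¹ * ‖x₁' - x₂' + y'‖^2) := by
        have hnn := norm_nonneg (lam • (x₁ - x₂ + y) + (1 - lam) • (x₁' - x₂' + y'))
        nlinarith [hn, norm_nonneg (x₁ - x₂ + y), norm_nonneg (x₁' - x₂' + y'),
          mul_nonneg (mul_nonneg hlam hmu) (sq_nonneg (‖x₁ - x₂ + y‖ - ‖x₁' - x₂' + y'‖))]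
      have hPmix : P ((2⁻¹:ℝ) • (lam • x₁ + (1 - lam) • x₁' + (lam • x₂ + (1 - lam) • x₂')))
          = lam * P ((2⁻¹:ℝ) • (x₁ + x₂)) + (1 - lam) * P ((2⁻¹:ℝ) • (x₁' + x₂')) := by
        have : (2⁻¹:ℝ) • (lam • x₁ + (1 - lam) • x₁' + (lam • x₂ + (1 - lam) • x₂'))
            = lam • ((2⁻¹:ℝ) • (x₁ + x₂)) + (1 - lam) • ((2⁻¹:ℝ) • (x₁' + x₂')) := by module
        rw [this]
        simp only [map_add, map_smul, smul_eq_mul]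
      rw [hPmix]
      have hcomb : lam * (2⁻¹*r₁ + 2⁻¹*r₂ + 8⁻¹*‖x₁ - x₂ + y‖^2 - P ((2⁻¹:ℝ) • (x₁+x₂)))
          + (1 - lam) * (2⁻¹*r₁' + 2⁻¹*r₂' + 8⁻¹*‖x₁' - x₂' + y'‖^2 - P ((2⁻¹:ℝ) • (x₁'+x₂')))
          < lam * t + (1 - lam) * t' := by
        rcases lt_or_eq_of_le hlam with hpos | hz
        · have h1'' := mul_lt_mul_of_pos_left hlt hpos
          have h2'' := mul_le_mul_of_nonneg_left (le_of_lt hlt') hmu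
          linarith
        · have h2'' := mul_lt_mul_of_pos_left hlt' (show (0:ℝ) < 1 - lam by linarith)
          have h1'' := mul_le_mul_of_nonneg_left (le_of_lt hlt) hlam
          linarith
      nlinarith [hq, hc₁, hc₂, hcomb]
    have hmem : ∀ T : ℝ, 2⁻¹*a₀ + 2⁻¹*b₀ + 8⁻¹*‖xb₁-xb₂‖^2 - P ((2⁻¹:ℝ) • (xb₁+xb₂)) < T →
        (((0:E), T) : E × ℝ) ∈ C := by
      intro T hT
      exact ⟨xb₁, xb₂, a₀, b₀, ha₀, hb₀, by simpa using hT⟩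
    have hnotmem : (((0:E), -a) : E × ℝ) ∉ C := by
      rintro ⟨x₁, x₂, r₁, r₂, h1, h2, hlt⟩
      have hhx := hVbar x₁ x₂ r₁ r₂ h1 h2
      have h3 : ((P ((2⁻¹:ℝ) • (x₁+x₂)) : ℝ):EReal)
          - ((2⁻¹*r₁ + 2⁻¹*r₂ + 8⁻¹*‖x₁-x₂‖^2 : ℝ):EReal) ≤ (a:EReal) := by
        rw [hacoe]
        refine le_trans (EReal.sub_le_sub le_rfl hhx) ?_
        exact le_iSup (fun x => ((P x : ℝ):EReal) - ProxAvg f₁ f₂ x) ((2⁻¹:ℝ) • (x₁ + x₂))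
      rw [← EReal.coe_sub, EReal.coe_le_coe_iff] at h3
      have hlt' : 2⁻¹*r₁ + 2⁻¹*r₂ + 8⁻¹*‖x₁ - x₂ + (0:E)‖^2 - P ((2⁻¹:ℝ) • (x₁+x₂)) < -a := hlt
      rw [add_zero] at hlt'
      linarith
    obtain ⟨φ, hφ⟩ := geometric_hahn_banach_open_point hCconv hCopen hnotmem
    set L : StrongDual ℝ E := φ.comp (ContinuousLinearMap.inl ℝ E ℝ) with hL
    set μ : ℝ := φ ((0:E), (1:ℝ)) with hμ
    have hdecomp : ∀ (y : E) (t : ℝ), φ (y, t) = L y + t * μ := by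
      intro y t
      have hyt : ((y, t) : E × ℝ) = ((y, 0) : E × ℝ) + t • (((0:E), (1:ℝ)) : E × ℝ) := by
        simp [Prod.ext_iff]
      rw [hyt, map_add, map_smul, smul_eq_mul]
      rfl
    have hμneg : μ < 0 := by
      have hTmem := hmem (max (2⁻¹*a₀ + 2⁻¹*b₀ + 8⁻¹*‖xb₁-xb₂‖^2 - P ((2⁻¹:ℝ) • (xb₁+xb₂))) (-a) + 1)
        (by linarith [le_max_left (2⁻¹*a₀ + 2⁻¹*b₀ + 8⁻¹*‖xb₁-xb₂‖^2 - P ((2⁻¹:ℝ) • (xb₁+xb₂))) (-a)])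
      have hlt := hφ _ hTmem
      rw [hdecomp, hdecomp] at hlt
      simp only [map_zero, zero_add] at hlt
      by_contra hc
      push_neg at hc
      nlinarith [le_max_right (2⁻¹*a₀ + 2⁻¹*b₀ + 8⁻¹*‖xb₁-xb₂‖^2 - P ((2⁻¹:ℝ) • (xb₁+xb₂))) (-a)]
    set ν : ℝ := -μ with hν
    have hνpos : 0 < ν := by simp [hν]; linarith
    set Q : StrongDual ℝ E := ν⁻¹ • L with hQdef
    have hQap : ∀ y, Q y = ν⁻¹ * L y := fun y => rfl
    have hkey : ∀ (x₁ x₂ : E) (r₁ r₂ : ℝ) (y : E), f₁ x₁ = (r₁:EReal) → f₂ x₂ = (r₂:EReal) →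
        Q y - a ≤ 2⁻¹*r₁ + 2⁻¹*r₂ + 8⁻¹*‖x₁ - x₂ + y‖^2 - P ((2⁻¹:ℝ) • (x₁+x₂)) := by
      intro x₁ x₂ r₁ r₂ y h1 h2
      set V : ℝ := 2⁻¹*r₁ + 2⁻¹*r₂ + 8⁻¹*‖x₁ - x₂ + y‖^2 - P ((2⁻¹:ℝ) • (x₁+x₂)) with hV
      have hstep : ∀ t, V < t → L y + t * μ < -a * μ := by
        intro t ht
        have hmemyt : ((y, t) : E × ℝ) ∈ C := ⟨x₁, x₂, r₁, r₂, h1, h2, ht⟩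
        have := hφ _ hmemyt
        rw [hdecomp, hdecomp] at this
        simpa using this
      have hlim : L y + V * μ ≤ -a * μ := by
        by_contra hc
        push_neg at hc
        set d : ℝ := (L y + V*μ + a*μ)/(2*ν) with hd
        have hdpos : 0 < d := by
          apply div_pos _ (by linarith)
          linarith
        have hdν : d * ν = (L y + V*μ + a*μ)/2 := by
          rw [hd]; field_simp
        have hst := hstep (V + d) (by linarith)
        have hexp : L y + (V + d)*μ = L y + V*μ - d*ν := by
          rw [hν]; ring
        rw [hexp, hdν] at hst
        nlinarith [hst, hc]
      have h2' : L y ≤ a * ν + ν * V := by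
        have : μ = -ν := by rw [hν]; ring
        rw [this] at hlim
        nlinarith [hlim]
      rw [hQap]
      have h3 : ν⁻¹ * L y ≤ V + a := by
        rw [inv_mul_le_iff₀ hνpos]
        nlinarith [h2']
      linarith
    set P₁ : StrongDual ℝ E := P - (2:ℝ) • Q with hP₁
    set P₂ : StrongDual ℝ E := P + (2:ℝ) • Q with hP₂
    have happ₁ : ∀ z, P₁ z = P z - 2 * Q z := by
      intro z; rw [hP₁]; simp
    have happ₂ : ∀ z, P₂ z = P z + 2 * Q z := by
      intro z; rw [hP₂]; simp
    have hkey2 : ∀ (x₁ x₂ : E) (r₁ r₂ : ℝ), f₁ x₁ = (r₁:EReal) → f₂ x₂ = (r₂:EReal) →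
        2⁻¹*(P₁ x₁ - r₁) + 2⁻¹*(P₂ x₂ - r₂) ≤ a - 2*‖Q‖^2 := by
      intro x₁ x₂ r₁ r₂ h1 h2
      have hε : ∀ ε : ℝ, 0 < ε → 2⁻¹*(P₁ x₁ - r₁) + 2⁻¹*(P₂ x₂ - r₂) ≤ a - 2*‖Q‖^2 + ε := by
        intro ε hεp
        obtain ⟨z, hz⟩ := exists_norming Q hεp
        have hk := hkey x₁ x₂ r₁ r₂ (z - x₁ + x₂) h1 h2
        have hrw : x₁ - x₂ + (z - x₁ + x₂) = z := by abel
        rw [hrw] at hk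
        have hQy : Q (z - x₁ + x₂) = Q z - Q x₁ + Q x₂ := by
          rw [map_add, map_sub]
        have hPx : P ((2⁻¹:ℝ) • (x₁+x₂)) = 2⁻¹ * P x₁ + 2⁻¹ * P x₂ := by
          rw [map_smul, map_add, smul_eq_mul]; ring
        rw [hQy, hPx] at hk
        rw [happ₁, happ₂]
        linarith [hz, hk]
      by_contra hcon
      push_neg at hcon
      have := hε ((2⁻¹*(P₁ x₁ - r₁) + 2⁻¹*(P₂ x₂ - r₂) - (a - 2*‖Q‖^2))/2) (by linarith)
      linarith
    have hub₁ : ∀ x₁, ((P₁ x₁ : ℝ):EReal) - f₁ x₁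
        ≤ ((2*(a - 2*‖Q‖^2) - (P₂ xb₂ - b₀) : ℝ):EReal) := by
      intro x₁
      rcases eq_or_ne (f₁ x₁) ⊤ with ht | ht
      · rw [ht]
        simp
      · obtain ⟨r₁, hr₁⟩ : ∃ r:ℝ, f₁ x₁ = (r:EReal) :=
          ⟨_, (EReal.coe_toReal ht (hproper₁.2 _)).symm⟩
        rw [hr₁, ← EReal.coe_sub]
        exact EReal.coe_le_coe_iff.mpr (by linarith [hkey2 x₁ xb₂ r₁ b₀ hr₁ hb₀])
    have hub₂ : ∀ x₂, ((P₂ x₂ : ℝ):EReal) - f₂ x₂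
        ≤ ((2*(a - 2*‖Q‖^2) - (P₁ xb₁ - a₀) : ℝ):EReal) := by
      intro x₂
      rcases eq_or_ne (f₂ x₂) ⊤ with ht | ht
      · rw [ht]
        simp
      · obtain ⟨r₂, hr₂⟩ : ∃ r:ℝ, f₂ x₂ = (r:EReal) :=
          ⟨_, (EReal.coe_toReal ht (hproper₂.2 _)).symm⟩
        rw [hr₂, ← EReal.coe_sub]
        exact EReal.coe_le_coe_iff.mpr (by linarith [hkey2 xb₁ x₂ a₀ r₂ ha₀ hr₂])
    have hF₁ub : FnConjE f₁ P₁ ≤ ((2*(a - 2*‖Q‖^2) - (P₂ xb₂ - b₀) : ℝ):EReal) := iSup_le hub₁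
    have hF₂ub : FnConjE f₂ P₂ ≤ ((2*(a - 2*‖Q‖^2) - (P₁ xb₁ - a₀) : ℝ):EReal) := iSup_le hub₂
    have hF₁lb : ((P₁ xb₁ - a₀ : ℝ):EReal) ≤ FnConjE f₁ P₁ := by
      rw [EReal.coe_sub, ← ha₀]
      exact le_iSup (fun y => ((P₁ y : ℝ):EReal) - f₁ y) xb₁
    have hF₂lb : ((P₂ xb₂ - b₀ : ℝ):EReal) ≤ FnConjE f₂ P₂ := by
      rw [EReal.coe_sub, ← hb₀]
      exact le_iSup (fun y => ((P₂ y : ℝ):EReal) - f₂ y) xb₂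
    have hF1netop : FnConjE f₁ P₁ ≠ ⊤ := fun h => by rw [h] at hF₁ub; exact ereal_not_top_le_coe _ hF₁ub
    have hF2netop : FnConjE f₂ P₂ ≠ ⊤ := fun h => by rw [h] at hF₂ub; exact ereal_not_top_le_coe _ hF₂ub
    have hF1nebot : FnConjE f₁ P₁ ≠ ⊥ := fun h => by
      rw [h, le_bot_iff] at hF₁lb; exact EReal.coe_ne_bot _ hF₁lb
    have hF2nebot : FnConjE f₂ P₂ ≠ ⊥ := fun h => by
      rw [h, le_bot_iff] at hF₂lb; exact EReal.coe_ne_bot _ hF₂lb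
    obtain ⟨u₁, hu₁⟩ : ∃ r : ℝ, (r:EReal) = FnConjE f₁ P₁ :=
      ⟨(FnConjE f₁ P₁).toReal, EReal.coe_toReal hF1netop hF1nebot⟩
    obtain ⟨u₂, hu₂⟩ : ∃ r : ℝ, (r:EReal) = FnConjE f₂ P₂ :=
      ⟨(FnConjE f₂ P₂).toReal, EReal.coe_toReal hF2netop hF2nebot⟩
    have hsum : 2⁻¹*u₁ + 2⁻¹*u₂ ≤ a - 2*‖Q‖^2 := by
      have hεs : ∀ ε:ℝ, 0 < ε → 2⁻¹*u₁ + 2⁻¹*u₂ ≤ a - 2*‖Q‖^2 + ε := by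
        intro ε hεp
        have h₁ : ((u₁ - ε:ℝ):EReal) < FnConjE f₁ P₁ := by
          rw [← hu₁]; exact_mod_cast sub_lt_self u₁ hεp
        have h₂ : ((u₂ - ε:ℝ):EReal) < FnConjE f₂ P₂ := by
          rw [← hu₂]; exact_mod_cast sub_lt_self u₂ hεp
        rw [FnConjE, lt_iSup_iff] at h₁ h₂
        obtain ⟨x₁, hx₁⟩ := h₁
        obtain ⟨x₂, hx₂⟩ := h₂
        have ht₁ : f₁ x₁ ≠ ⊤ := by
          intro h; rw [h] at hx₁
          have : ((P₁ x₁ : ℝ):EReal) - ⊤ = ⊥ := (ereal_real_sub_eq_bot_iff _ _).mpr rfl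
          rw [this] at hx₁; exact (not_lt_bot hx₁)
        have ht₂ : f₂ x₂ ≠ ⊤ := by
          intro h; rw [h] at hx₂
          have : ((P₂ x₂ : ℝ):EReal) - ⊤ = ⊥ := (ereal_real_sub_eq_bot_iff _ _).mpr rfl
          rw [this] at hx₂; exact (not_lt_bot hx₂)
        obtain ⟨r₁, hr₁⟩ : ∃ r:ℝ, f₁ x₁ = (r:EReal) :=
          ⟨_, (EReal.coe_toReal ht₁ (hproper₁.2 _)).symm⟩
        obtain ⟨r₂, hr₂⟩ : ∃ r:ℝ, f₂ x₂ = (r:EReal) :=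
          ⟨_, (EReal.coe_toReal ht₂ (hproper₂.2 _)).symm⟩
        rw [hr₁, ← EReal.coe_sub, EReal.coe_lt_coe_iff] at hx₁
        rw [hr₂, ← EReal.coe_sub, EReal.coe_lt_coe_iff] at hx₂
        have := hkey2 x₁ x₂ r₁ r₂ hr₁ hr₂
        linarith
      by_contra hcon
      push_neg at hcon
      have := hεs ((2⁻¹*u₁ + 2⁻¹*u₂ - (a - 2*‖Q‖^2))/2) (by linarith)
      linarith
    rw [ProxAvg]
    have hPc : P = (2⁻¹:ℝ) • (P₁ + P₂) := by
      rw [hP₁, hP₂]; module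
    refine (iInf_le _ ⟨(P₁, P₂), hPc⟩).trans ?_
    · dsimp only
      rw [← hu₁, ← hu₂]
      have hPdiff : P₁ - P₂ = (-4:ℝ) • Q := by
        rw [hP₁, hP₂]; module
      have hnorm : ‖P₁ - P₂‖ = 4 * ‖Q‖ := by
        rw [hPdiff, norm_smul, Real.norm_eq_abs]
        norm_num
      rw [hnorm, ← EReal.coe_mul, ← EReal.coe_mul, ← EReal.coe_add, ← EReal.coe_add, ← hacoe]
      exact EReal.coe_le_coe_iff.mpr (by nlinarith [hsum])
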